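/- Let W₁ ≥ W₂ ≥ 0 (request weights of two contents), and let g_i(x) = W_i·exp(−x·λ·δ) + c·x with λ, δ, c > 0. If k_i denotes the least minimizer of g_i over ℕ, then k₁ ≥ k₂: the more popular content is cached at at least as many helpers in the optimum. -/
import Mathlib


/-- Monotonicity of the optimal helper count in popularity: if
`W₁ ≥ W₂ ≥ 0` and `k_i` is the least minimizer over `ℕ` of
`g_i(x) = W_i·exp(−xλδ) + c·x`, then `k₁ ≥ k₂`. -/
theorem stmt_14 (W₁ W₂ lam δ c : ℝ) (hW : W₂ ≤ W₁) (hW₂ : 0 ≤ W₂)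
    (hlam : 0 < lam) (hδ : 0 < δ) (hc : 0 < c)
    (g₁ g₂ : ℕ → ℝ)
    (hg₁ : ∀ x, g₁ x = W₁ * Real.exp (-(x : ℝ) * lam * δ) + c * x)
    (hg₂ : ∀ x, g₂ x = W₂ * Real.exp (-(x : ℝ) * lam * δ) + c * x)
    (k₁ k₂ : ℕ)
    (hk₁min : ∀ x : ℕ, g₁ k₁ ≤ g₁ x)
    (hk₁least : ∀ x : ℕ, g₁ x ≤ g₁ k₁ → k₁ ≤ x)
    (hk₂min : ∀ x : ℕ, g₂ k₂ ≤ g₂ x)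
    (hk₂least : ∀ x : ℕ, g₂ x ≤ g₂ k₂ → k₂ ≤ x) :
    k₂ ≤ k₁ := by
  by_contra h
  push_neg at h
  -- h : k₁ < k₂
  have h2 : ¬ g₂ k₁ ≤ g₂ k₂ := fun hle => absurd (hk₂least k₁ hle) (by omega)
  push_neg at h2
  have h1 : g₁ k₁ ≤ g₁ k₂ := hk₁min k₂
  rw [hg₁ k₁, hg₁ k₂] at h1
  rw [hg₂ k₁, hg₂ k₂] at h2
  set E₁ := Real.exp (-(k₁ : ℝ) * lam * δ) with hE₁
  set E₂ := Real.exp (-(k₂ : ℝ) * lam * δ) with hE₂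
  have hE : E₂ ≤ E₁ := by
    apply Real.exp_le_exp.mpr
    have : (k₁ : ℝ) ≤ (k₂ : ℝ) := by exact_mod_cast h.le
    nlinarith [mul_pos hlam hδ, mul_nonneg (sub_nonneg.mpr this) (mul_pos hlam hδ).le]
  nlinarith [mul_nonneg (sub_nonneg.mpr hW) (sub_nonneg.mpr hE)]
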